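/- arXiv:2502.16968 — 4 statements merged into one kernel-verified Lean document; each statement's English description precedes it below -/
import Mathlib

section
/- Let $x, y \in \mathbb{R}_{\geq 0}^m$ with $y$ weakly majorized by $x$ (i.e. for every $k = 1, \ldots, m$, the sum of the $k$ largest entries of $y$ is at most the sum of the $k$ largest entries of $x$). Then $y$ lies in the convex hull of the set of points of the form $(\delta_1 x_{\sigma(1)}, \ldots, \delta_m x_{\sigma(m)})$, where $\sigma$ ranges over permutations of $\{1,\ldots,m\}$ and each $\delta_i \in \{0,1\}$. -/
open Finset

/-- Sum of the `k` largest entries of `x` (as the sup of sums over `k`-element subsets). -/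
noncomputable def sumLargest {m : ℕ} (x : Fin m → ℝ) (k : ℕ) : ℝ :=
  sSup ((fun s : Finset (Fin m) => ∑ i ∈ s, x i) '' {s | s.card = k})

/-- `y` is weakly majorized by `x`. -/
def WeaklyMajorizedBy {m : ℕ} (y x : Fin m → ℝ) : Prop :=
  ∀ k : ℕ, 1 ≤ k → k ≤ m → sumLargest y k ≤ sumLargest x k

/-- The set `E(x)` of vectors `(δ₁ x_{σ(1)}, …, δ_m x_{σ(m)})` with `σ` a permutation
and `δ_i ∈ {0,1}`. -/
def permZeroSet {m : ℕ} (x : Fin m → ℝ) : Set (Fin m → ℝ) :=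
  {z | ∃ (σ : Equiv.Perm (Fin m)) (δ : Fin m → ℝ),
    (∀ i, δ i = 0 ∨ δ i = 1) ∧ z = fun i => δ i * x (σ i)}

/-- A strictly monotone map of `Fin`s satisfies `j ≤ f j` (as naturals). -/
lemma finStrictMono_le {k m : ℕ} {f : Fin k → Fin m} (hf : StrictMono f) :
    ∀ (v : ℕ) (hv : v < k), v ≤ (f ⟨v, hv⟩ : ℕ) := by
  intro v
  induction v with
  | zero => intro hv; exact Nat.zero_le _
  | succ n ihn =>
    intro hv
    have hn : n < k := Nat.lt_of_succ_lt hv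
    have h2 : f ⟨n, hn⟩ < f ⟨n + 1, hv⟩ := hf (by simp [Fin.lt_def])
    have h3 : (f ⟨n, hn⟩ : ℕ) < (f ⟨n + 1, hv⟩ : ℕ) := Fin.lt_def.mp h2
    have h1 := ihn hn
    omega

/-- Every tuple can be sorted into decreasing order by a permutation. -/
lemma exists_antitone_perm {m : ℕ} (w : Fin m → ℝ) :
    ∃ σ : Equiv.Perm (Fin m), Antitone (w ∘ σ) := by
  refine ⟨Tuple.sort (-w), fun i j hij => ?_⟩
  have h := Tuple.monotone_sort (-w) hij
  simp only [Function.comp_apply, Pi.neg_apply, neg_le_neg_iff] at h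
  exact h

/-- `sumLargest` equals the sum of the first `k` entries of a decreasing rearrangement. -/
lemma sumLargest_eq_sorted {m k : ℕ} (w : Fin m → ℝ) (σ : Equiv.Perm (Fin m))
    (hσ : Antitone (w ∘ σ)) (hk : k ≤ m) :
    sumLargest w k = ∑ j : Fin k, w (σ (Fin.castLE hk j)) := by
  apply IsGreatest.csSup_eq
  constructor
  · refine ⟨Finset.map ((Fin.castLEOrderEmb hk).toEmbedding.trans σ.toEmbedding)
      Finset.univ, by simp, ?_⟩
    show ∑ i ∈ Finset.map _ Finset.univ, w i = _
    rw [Finset.sum_map]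
    simp
    rfl
  · rintro r ⟨s, hs, rfl⟩
    simp only [Set.mem_setOf_eq] at hs
    show ∑ i ∈ s, w i ≤ _
    have hcard : (s.image σ.symm).card = k := by
      rw [Finset.card_image_of_injective _ σ.symm.injective, hs]
    have h1 : ∑ i ∈ s, w i = ∑ j ∈ s.image σ.symm, w (σ j) := by
      rw [Finset.sum_image (fun a _ b _ h => σ.symm.injective h)]
      simp
    set t := s.image σ.symm with ht
    have h2 : t = Finset.map (t.orderEmbOfFin hcard).toEmbedding Finset.univ := by
      ext a
      simp only [Finset.mem_map, Finset.mem_univ, true_and,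
        RelEmbedding.coe_toEmbedding]
      constructor
      · intro ha
        have : a ∈ Set.range (t.orderEmbOfFin hcard) := by
          rw [Finset.range_orderEmbOfFin]; exact ha
        exact this
      · rintro ⟨j, rfl⟩
        exact Finset.orderEmbOfFin_mem _ _ _
    rw [h1, h2, Finset.sum_map]
    apply Finset.sum_le_sum
    intro j _
    have hle : Fin.castLE hk j ≤ (t.orderEmbOfFin hcard).toEmbedding j := by
      rw [Fin.le_def]
      have := finStrictMono_le (t.orderEmbOfFin hcard).strictMono j j.isLt
      simpa using this
    exact hσ hle

/-- One-sided Abel summation comparison. -/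
lemma abel_sum_le : ∀ (n : ℕ) (a b b' : ℕ → ℝ),
    (∀ i j, i ≤ j → j < n → a j ≤ a i) →
    (∀ i, i < n → 0 ≤ a i) →
    (∀ k, k ≤ n → ∑ i ∈ Finset.range k, b i ≤ ∑ i ∈ Finset.range k, b' i) →
    ∑ i ∈ Finset.range n, a i * b i ≤ ∑ i ∈ Finset.range n, a i * b' i := by
  intro n
  induction n with
  | zero => intro a b b' _ _ _; simp
  | succ n ih =>
    intro a b b' haa ha0 hpb
    have key : ∀ c : ℕ → ℝ, ∑ i ∈ Finset.range (n + 1), a i * c i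
        = (∑ i ∈ Finset.range n, (a i - a n) * c i)
          + a n * ∑ i ∈ Finset.range (n + 1), c i := by
      intro c
      simp only [sub_mul, Finset.sum_sub_distrib, Finset.mul_sum, Finset.sum_range_succ,
        mul_add]
      ring
    rw [key b, key b']
    apply add_le_add
    · refine ih (fun i => a i - a n) b b' ?_ ?_ ?_
      · intro i j hij hj
        exact sub_le_sub_right (haa i j hij (hj.trans (Nat.lt_succ_self n))) _
      · intro i hi
        exact sub_nonneg.2 (haa i n hi.le (Nat.lt_succ_self n))
      · intro k hk
        exact hpb k (hk.trans (Nat.le_succ n))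
    · exact mul_le_mul_of_nonneg_left (hpb (n + 1) le_rfl) (ha0 n (Nat.lt_succ_self n))

/-- Any continuous linear functional on `Fin m → ℝ` is given by coordinates. -/
lemma clm_eq_sum {m : ℕ} (f : (Fin m → ℝ) →L[ℝ] ℝ) (c : Fin m → ℝ)
    (hc : ∀ i, c i = f (fun j => if i = j then 1 else 0)) (v : Fin m → ℝ) :
    f v = ∑ i, v i * c i := by
  conv_lhs => rw [pi_eq_sum_univ v]
  rw [map_sum]
  refine Finset.sum_congr rfl fun i _ => ?_
  rw [map_smul, hc i, smul_eq_mul]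

theorem weaklyMajorized_mem_convexHull {m : ℕ} (x y : Fin m → ℝ)
    (hx : ∀ i, 0 ≤ x i) (hy : ∀ i, 0 ≤ y i)
    (hmaj : WeaklyMajorizedBy y x) :
    y ∈ convexHull ℝ (permZeroSet x) := by
  classical
  by_contra hmem
  have hEfin : (permZeroSet x).Finite := by
    have hsub : permZeroSet x ⊆ Set.range (fun p : Equiv.Perm (Fin m) × (Fin m → Bool) =>
        fun i => (if p.2 i then (1 : ℝ) else 0) * x (p.1 i)) := by
      rintro z ⟨σ, δ, hδ, rfl⟩
      refine ⟨(σ, fun i => δ i = 1), ?_⟩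
      ext i
      rcases hδ i with h | h <;> simp [h]
    exact (Set.finite_range _).subset hsub
  obtain ⟨f, u, hfs, hfy⟩ := geometric_hahn_banach_closed_point
    (convex_convexHull ℝ _) (hEfin.isClosed_convexHull (𝕜 := ℝ)) hmem
  set c : Fin m → ℝ := fun i => f (fun j => if i = j then 1 else 0) with hcdef
  have hc : ∀ i, c i = f (fun j => if i = j then 1 else 0) := fun i => rfl
  set cp : Fin m → ℝ := fun i => max (c i) 0 with hcpdef
  obtain ⟨τ, hτ⟩ := exists_antitone_perm cp
  obtain ⟨π, hπ⟩ := exists_antitone_perm y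
  obtain ⟨ρ, hρ⟩ := exists_antitone_perm x
  set δ : Fin m → ℝ := fun i => if 0 < c i then 1 else 0 with hδdef
  set σ : Equiv.Perm (Fin m) := τ.symm.trans ρ with hσdef
  set z : Fin m → ℝ := fun i => δ i * x (σ i) with hzdef
  have hzE : z ∈ permZeroSet x := by
    refine ⟨σ, δ, fun i => ?_, rfl⟩
    by_cases h : 0 < c i <;> simp [hδdef, h]
  have hδc : ∀ i, δ i * c i = cp i := by
    intro i
    by_cases h : 0 < c i
    · simp [hδdef, hcpdef, h, max_eq_left h.le]
    · simp [hδdef, hcpdef, h, max_eq_right (not_lt.mp h)]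
  set a : Fin m → ℝ := cp ∘ τ with hadef
  set b : Fin m → ℝ := y ∘ π with hbdef
  set b' : Fin m → ℝ := x ∘ ρ with hb'def
  set σ₀ : Equiv.Perm (Fin m) := τ.trans π.symm with hσ₀def
  -- Step 1 : f y ≤ ∑ a k * b (σ₀ k)
  have step1 : f y ≤ ∑ k, a k * b (σ₀ k) := by
    have h1 : f y ≤ ∑ i, y i * cp i := by
      rw [clm_eq_sum f c hc y]
      exact Finset.sum_le_sum fun i _ =>
        mul_le_mul_of_nonneg_left (le_max_left _ _) (hy i)
    have h2 : ∑ i, y i * cp i = ∑ k, a k * b (σ₀ k) := by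
      rw [← Equiv.sum_comp τ (fun i => y i * cp i)]
      refine Finset.sum_congr rfl fun k _ => ?_
      have hbk : b (σ₀ k) = y (τ k) := by
        simp [hbdef, hσ₀def, Equiv.trans_apply]
      rw [hbk, hadef, mul_comm]
      rfl
    exact h1.trans h2.le
  -- Step 2 : rearrangement
  have hmono : Monovary a b := by
    intro i j hb
    rcases le_total i j with h | h
    · exact absurd (hπ h) (not_le.mpr hb)
    · exact hτ h
  have step2 : ∑ k, a k * b (σ₀ k) ≤ ∑ k, a k * b k :=
    hmono.sum_mul_comp_perm_le_sum_mul (σ := σ₀)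
  -- Step 3 : Abel summation with weak majorization
  set A : ℕ → ℝ := fun i => if h : i < m then a ⟨i, h⟩ else 0 with hAdef
  set B : ℕ → ℝ := fun i => if h : i < m then b ⟨i, h⟩ else 0 with hBdef
  set B' : ℕ → ℝ := fun i => if h : i < m then b' ⟨i, h⟩ else 0 with hB'def
  have hAB : ∑ k, a k * b k = ∑ i ∈ Finset.range m, A i * B i := by
    rw [← Fin.sum_univ_eq_sum_range (fun i => A i * B i) m]
    refine Finset.sum_congr rfl fun k _ => ?_
    simp [hAdef, hBdef, k.isLt]
  have hAB' : ∑ k, a k * b' k = ∑ i ∈ Finset.range m, A i * B' i := by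
    rw [← Fin.sum_univ_eq_sum_range (fun i => A i * B' i) m]
    refine Finset.sum_congr rfl fun k _ => ?_
    simp [hAdef, hB'def, k.isLt]
  have hps : ∀ k, k ≤ m → ∑ i ∈ Finset.range k, B i ≤ ∑ i ∈ Finset.range k, B' i := by
    intro k hk
    have hBk : ∑ i ∈ Finset.range k, B i = ∑ j : Fin k, y (π (Fin.castLE hk j)) := by
      rw [← Fin.sum_univ_eq_sum_range B k]
      refine Finset.sum_congr rfl fun j _ => ?_
      have hj : (j : ℕ) < m := lt_of_lt_of_le j.isLt hk
      simp only [hBdef, dif_pos hj]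
      rfl
    have hB'k : ∑ i ∈ Finset.range k, B' i = ∑ j : Fin k, x (ρ (Fin.castLE hk j)) := by
      rw [← Fin.sum_univ_eq_sum_range B' k]
      refine Finset.sum_congr rfl fun j _ => ?_
      have hj : (j : ℕ) < m := lt_of_lt_of_le j.isLt hk
      simp only [hB'def, dif_pos hj]
      rfl
    rcases Nat.eq_zero_or_pos k with rfl | hk1
    · simp
    · rw [hBk, hB'k, ← sumLargest_eq_sorted y π hπ hk, ← sumLargest_eq_sorted x ρ hρ hk]
      exact hmaj k hk1 hk
  have step3 : ∑ k, a k * b k ≤ ∑ k, a k * b' k := by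
    rw [hAB, hAB']
    refine abel_sum_le m A B B' ?_ ?_ hps
    · intro i j hij hj
      have hi : i < m := lt_of_le_of_lt hij hj
      simp only [hAdef, dif_pos hj, dif_pos hi]
      exact hτ (show (⟨i, hi⟩ : Fin m) ≤ ⟨j, hj⟩ from hij)
    · intro i hi
      simp only [hAdef, dif_pos hi]
      exact le_max_right _ _
  -- Step 4 : ∑ a k * b' k = f z
  have step4 : ∑ k, a k * b' k = f z := by
    rw [clm_eq_sum f c hc z, ← Equiv.sum_comp τ (fun i => z i * c i)]
    refine Finset.sum_congr rfl fun k _ => ?_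
    have h1 : σ (τ k) = ρ k := by
      simp [hσdef, Equiv.trans_apply]
    have h2 : z (τ k) = δ (τ k) * x (ρ k) := by
      rw [hzdef]; simp only [h1]
    rw [h2, mul_right_comm, hδc (τ k)]
    rfl
  -- contradiction
  have hzc : f z < u := hfs z (subset_convexHull ℝ _ hzE)
  have : f y ≤ f z := ((step1.trans step2).trans step3).trans step4.le
  linarith
end

section
/- Let $a \in \mathbb{R}_{\geq 0}^m$ with $a_1 \geq a_2 \geq \cdots \geq a_m$ and $a_1 > 1$. Then $a$ satisfies both conditions (i) $a_i a_j \leq 1$ for all $i \neq j$ and (ii) $\prod_{i=1}^m (1-a_i) + \sum_{i=1}^m (1-a_1)\cdots a_i \cdots (1-a_m) \geq 0$, if and only if $a_1 a_2 \leq 1$ and $\frac{1}{1-a_1} + \sum_{i=2}^m \frac{1}{1-a_i} \leq m - 1$. -/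
open Finset

theorem mem_Nbar_iff_of_first_gt_one {m : ℕ} (hm : 2 ≤ m) (a : Fin m → ℝ)
    (h0 : ∀ i, 0 ≤ a i) (hsort : Antitone a)
    (h1 : 1 < a ⟨0, by omega⟩) :
    ((∀ i j, i ≠ j → a i * a j ≤ 1) ∧
      0 ≤ ∏ i, (1 - a i) + ∑ i, a i * ∏ j ∈ univ.erase i, (1 - a j))
    ↔ (a ⟨0, by omega⟩ * a ⟨1, by omega⟩ ≤ 1 ∧
        ∑ i, 1 / (1 - a i) ≤ (m : ℝ) - 1) := by
  have i0 : Fin m := ⟨0, by omega⟩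
  have hA : (∀ i j, i ≠ j → a i * a j ≤ 1) ↔
      a (⟨0, by omega⟩ : Fin m) * a ⟨1, by omega⟩ ≤ 1 := by
    constructor
    · intro h; exact h _ _ (by simp [Fin.ext_iff])
    · intro h i j hij
      have key : ∀ i j : Fin m, (i : ℕ) < (j : ℕ) → a i * a j ≤ 1 := by
        intro i j hlt
        have ha : a i ≤ a (⟨0, by omega⟩ : Fin m) := hsort (by simp [Fin.le_def])
        have hb : a j ≤ a (⟨1, by omega⟩ : Fin m) :=
          hsort (by rw [Fin.le_def]; simpa using by omega)
        calc a i * a j ≤ a (⟨0, by omega⟩ : Fin m) * a ⟨1, by omega⟩ :=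
              mul_le_mul ha hb (h0 j) (by linarith)
          _ ≤ 1 := h
      rcases lt_or_gt_of_ne (fun hv => hij (Fin.ext hv)) with hlt | hlt
      · exact key i j hlt
      · rw [mul_comm]; exact key j i hlt
  have main : a (⟨0, by omega⟩ : Fin m) * a ⟨1, by omega⟩ ≤ 1 →
      ((0 : ℝ) ≤ ∏ i, (1 - a i) + ∑ i, a i * ∏ j ∈ univ.erase i, (1 - a j) ↔
        ∑ i, 1 / (1 - a i) ≤ (m : ℝ) - 1) := by
    intro hA'
    have hlt1 : ∀ i : Fin m, i ≠ ⟨0, by omega⟩ → a i < 1 := by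
      intro i hi
      have hv : (i : ℕ) ≠ 0 := by simpa [Fin.ext_iff] using hi
      have hle : a i ≤ a (⟨1, by omega⟩ : Fin m) :=
        hsort (by rw [Fin.le_def]; simpa using by omega)
      nlinarith [h0 i, h0 (⟨1, by omega⟩ : Fin m)]
    have hne : ∀ i : Fin m, 1 - a i ≠ 0 := by
      intro i
      by_cases hi : i = ⟨0, by omega⟩
      · rw [hi]; intro h; rw [sub_eq_zero] at h; linarith
      · have := hlt1 i hi; intro h; rw [sub_eq_zero] at h; linarith
    have hP : ∏ i, (1 - a i) < 0 := by
      rw [← Finset.mul_prod_erase univ (fun i => 1 - a i)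
        (mem_univ (⟨0, by omega⟩ : Fin m))]
      apply mul_neg_of_neg_of_pos
      · show (1 : ℝ) - a ⟨0, by omega⟩ < 0
        linarith
      · apply Finset.prod_pos
        intro j hj
        have hjne : j ≠ ⟨0, by omega⟩ := (Finset.mem_erase.mp hj).1
        have := hlt1 j hjne
        show (0 : ℝ) < 1 - a j
        linarith
    have hsum : ∑ i, a i * ∏ j ∈ univ.erase i, (1 - a j)
        = (∏ i, (1 - a i)) * ∑ i, a i / (1 - a i) := by
      rw [Finset.mul_sum]
      apply Finset.sum_congr rfl
      intro i _
      rw [← Finset.mul_prod_erase univ (fun j => 1 - a j) (mem_univ i)]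
      have := hne i
      field_simp
    have hsum2 : ∑ i, a i / (1 - a i) = (∑ i, 1 / (1 - a i)) - m := by
      have h1' : ∀ i : Fin m, a i / (1 - a i) = 1 / (1 - a i) - 1 := by
        intro i; field_simp [hne i]; ring
      rw [Finset.sum_congr rfl (fun i _ => h1' i), Finset.sum_sub_distrib]
      simp
    rw [hsum, hsum2]
    set P := ∏ i, (1 - a i) with hPdef
    set S := ∑ i, 1 / (1 - a i) with hSdef
    constructor
    · intro h
      by_contra hc
      push_neg at hc
      nlinarith
    · intro h
      have key : (0 : ℝ) ≤ (-P) * (-(S - ((m : ℝ) - 1))) :=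
        mul_nonneg (by linarith) (by linarith)
      nlinarith
  constructor
  · rintro ⟨hi, hii⟩
    exact ⟨hA.mp hi, (main (hA.mp hi)).mp hii⟩
  · rintro ⟨h01, hS⟩
    exact ⟨hA.mpr h01, (main h01).mpr hS⟩
end

section
/- Let $m \geq 3$ and let $a \in \mathbb{R}_{\geq 0}^m$ with $a_1 \geq a_2 \geq \cdots \geq a_m \geq 0$. Then $\prod_{i=1}^m (1 + a_i) \geq 1 + \sum_{i=1}^m a_i + (a_1 + a_2) \sum_{i=3}^m a_i$. -/
open Finset

lemma aux_one_add_sum_le_prod {α : Type*} [DecidableEq α] (s : Finset α) (a : α → ℝ)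
    (h0 : ∀ i ∈ s, 0 ≤ a i) :
    1 + ∑ i ∈ s, a i ≤ ∏ i ∈ s, (1 + a i) := by
  induction s using Finset.induction_on with
  | empty => simp
  | @insert x s hx ih =>
    rw [Finset.sum_insert hx, Finset.prod_insert hx]
    have h1 : 0 ≤ a x := h0 x (Finset.mem_insert_self x s)
    have h2 : ∀ i ∈ s, 0 ≤ a i := fun i hi => h0 i (Finset.mem_insert_of_mem hi)
    have h3 := ih h2
    have h4 : 0 ≤ ∑ i ∈ s, a i := Finset.sum_nonneg h2
    nlinarith [h3, h1, h4]

theorem prod_ge_one_add_sum {m : ℕ} (hm : 3 ≤ m) (a : Fin m → ℝ)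
    (h0 : ∀ i, 0 ≤ a i) (hsort : Antitone a) :
    ∏ i, (1 + a i) ≥
      1 + ∑ i, a i +
        (a ⟨0, by omega⟩ + a ⟨1, by omega⟩) *
          ∑ i ∈ univ.filter (fun i : Fin m => 2 ≤ (i : ℕ)), a i := by
  set s := univ.filter (fun i : Fin m => 2 ≤ (i : ℕ)) with hs
  have hfilt : univ.filter (fun i : Fin m => ¬ 2 ≤ (i : ℕ)) =
      {⟨0, by omega⟩, ⟨1, by omega⟩} := by
    ext i
    simp only [Finset.mem_filter, Finset.mem_univ, true_and, Finset.mem_insert,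
      Finset.mem_singleton, Fin.ext_iff]
    omega
  have hne : (⟨0, by omega⟩ : Fin m) ≠ ⟨1, by omega⟩ := by simp [Fin.ext_iff]
  have hprod : ∏ i, (1 + a i) =
      (1 + a ⟨0, by omega⟩) * (1 + a ⟨1, by omega⟩) * ∏ i ∈ s, (1 + a i) := by
    rw [← Finset.prod_filter_mul_prod_filter_not univ (fun i : Fin m => 2 ≤ (i : ℕ)),
      hfilt, Finset.prod_insert (by simpa using hne), Finset.prod_singleton]
    ring
  have hsum : ∑ i, a i = a ⟨0, by omega⟩ + a ⟨1, by omega⟩ + ∑ i ∈ s, a i := by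
    rw [← Finset.sum_filter_add_sum_filter_not univ (fun i : Fin m => 2 ≤ (i : ℕ)),
      hfilt, Finset.sum_insert (by simpa using hne), Finset.sum_singleton]
    ring
  have hP := aux_one_add_sum_le_prod s a (fun i _ => h0 i)
  have hS : 0 ≤ ∑ i ∈ s, a i := Finset.sum_nonneg fun i _ => h0 i
  have h1 := h0 ⟨0, by omega⟩
  have h2 := h0 ⟨1, by omega⟩
  rw [hprod, hsum]
  nlinarith [mul_nonneg h1 h2, mul_nonneg (mul_nonneg h1 h2) hS,
    mul_nonneg h1 hS, mul_nonneg h2 hS,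
    mul_le_mul_of_nonneg_left hP (by nlinarith : (0:ℝ) ≤ (1 + a ⟨0, by omega⟩) * (1 + a ⟨1, by omega⟩))]
end

section
/- Let $\mathcal{C} \subseteq \mathbb{R}_{\geq 0}^m$ be a convex set symmetric under permutations of coordinates, and let $\overline{\mathcal{N}}$ denote the set of $a \in \mathbb{R}_{\geq 0}^m$ satisfying $a_i a_j \leq 1$ for all $i \neq j$ and $\prod_{i=1}^m (1-a_i) + \sum_{i=1}^m (1-a_1)\cdots a_i \cdots (1-a_m) \geq 0$. If $x \in \mathcal{C} \subseteq \overline{\mathcal{N}}$, then every $y \in \mathbb{R}_{\geq 0}^m$ that is weakly majorized by $x$ (i.e. for each $k$, the sum of the $k$ largest entries of $y$ is at most that of $x$) also lies in $\overline{\mathcal{N}}$. -/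
open Finset

/-- The region `𝒩̄`. -/
def Nbar (m : ℕ) : Set (Fin m → ℝ) :=
  {a | (∀ i, 0 ≤ a i) ∧ (∀ i j, i ≠ j → a i * a j ≤ 1) ∧
    0 ≤ ∏ i, (1 - a i) + ∑ i, a i * ∏ j ∈ univ.erase i, (1 - a j)}

section Aux

variable {m : ℕ}

lemma sumLargest_finite (x : Fin m → ℝ) (k : ℕ) :
    ((fun s : Finset (Fin m) => ∑ i ∈ s, x i) '' {s | s.card = k}).Finite :=
  (Set.toFinite {s : Finset (Fin m) | s.card = k}).image _

lemma le_sumLargest (x : Fin m → ℝ) {k : ℕ} (s : Finset (Fin m)) (h : s.card = k) :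
    ∑ i ∈ s, x i ≤ sumLargest x k :=
  le_csSup (sumLargest_finite x k).bddAbove ⟨s, h, rfl⟩

lemma sumLargest_le (x : Fin m → ℝ) {k : ℕ} (hk : k ≤ m) {c : ℝ}
    (h : ∀ s : Finset (Fin m), s.card = k → ∑ i ∈ s, x i ≤ c) :
    sumLargest x k ≤ c := by
  apply csSup_le
  · obtain ⟨s, -, hs⟩ := Finset.exists_subset_card_eq (α := Fin m) (s := univ) (n := k)
      (by simpa using hk)
    exact ⟨_, ⟨s, hs, rfl⟩⟩
  · rintro r ⟨s, hs, rfl⟩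
    exact h s hs

lemma sumLargest_comp_perm (x : Fin m → ℝ) (σ : Equiv.Perm (Fin m)) (k : ℕ) :
    sumLargest (x ∘ σ) k = sumLargest x k := by
  unfold sumLargest
  congr 1
  ext r
  constructor
  · rintro ⟨s, hs, rfl⟩
    refine ⟨s.image σ, ?_, ?_⟩
    · simpa [Finset.card_image_of_injective _ σ.injective] using hs
    · simp [Finset.sum_image (fun a _ b _ h => σ.injective h)]
  · rintro ⟨s, hs, rfl⟩
    refine ⟨s.image σ.symm, ?_, ?_⟩
    · simpa [Finset.card_image_of_injective _ σ.symm.injective] using hs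
    · simp only []
      rw [Finset.sum_image (fun a _ b _ h => σ.symm.injective h)]
      simp

lemma Nbar_comp_perm {a : Fin m → ℝ} (ha : a ∈ Nbar m) (σ : Equiv.Perm (Fin m)) :
    a ∘ σ ∈ Nbar m := by
  obtain ⟨h0, h1, h2⟩ := ha
  refine ⟨fun i => h0 _, fun i j hij => h1 _ _ (fun h => hij (σ.injective h)), ?_⟩
  have hprod : ∏ i, (1 - (a ∘ σ) i) = ∏ i, (1 - a i) := by
    exact Equiv.prod_comp σ (fun i => 1 - a i)
  have hsum : ∑ i, (a ∘ σ) i * ∏ j ∈ univ.erase i, (1 - (a ∘ σ) j)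
      = ∑ i, a i * ∏ j ∈ univ.erase i, (1 - a j) := by
    rw [← Equiv.sum_comp σ (fun i => a i * ∏ j ∈ univ.erase i, (1 - a j))]
    refine Finset.sum_congr rfl ?_
    intro i _
    simp only [Function.comp_apply]
    congr 1
    have himg : (univ.erase i).image σ = univ.erase (σ i) := by
      ext j
      simp only [Finset.mem_image, Finset.mem_erase, Finset.mem_univ, and_true, true_and]
      constructor
      · rintro ⟨b, hb, rfl⟩
        exact fun h => hb (σ.injective h)
      · intro hj
        exact ⟨σ.symm j, fun h => hj (by rw [← h]; simp), by simp⟩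
    calc ∏ j ∈ univ.erase i, (1 - a (σ j))
        = ∏ j ∈ (univ.erase i).image σ, (1 - a j) :=
          (Finset.prod_image (f := fun j => 1 - a j)
            (g := ⇑σ) (s := univ.erase i) (fun p _ q _ h => σ.injective h)).symm
      _ = ∏ j ∈ univ.erase (σ i), (1 - a j) := by rw [himg]
  rw [hprod, hsum]
  exact h2

lemma strictMono_fin_le {k : ℕ} (f : Fin k → Fin m) (hf : StrictMono f) :
    ∀ j : Fin k, (j : ℕ) ≤ (f j : ℕ) := by
  suffices H : ∀ n (hn : n < k), n ≤ (f ⟨n, hn⟩ : ℕ) by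
    intro j; simpa using H j j.isLt
  intro n
  induction n with
  | zero => simp
  | succ i ih =>
    intro hn
    have h1 := ih (Nat.lt_of_succ_lt hn)
    have h2 : (f ⟨i, Nat.lt_of_succ_lt hn⟩ : ℕ) < (f ⟨i + 1, hn⟩ : ℕ) := by
      apply Fin.lt_def.mp
      apply hf
      simp [Fin.lt_def]
    omega

/-- `extN x` : extension of `x` to `ℕ` by zero. -/
noncomputable def extN (x : Fin m → ℝ) : ℕ → ℝ := fun j => if h : j < m then x ⟨j, h⟩ else 0

lemma extN_apply (x : Fin m → ℝ) {j : ℕ} (h : j < m) : extN x j = x ⟨j, h⟩ := dif_pos h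

/-- The prefix set. -/
def preSet (m k : ℕ) : Finset (Fin m) := univ.filter (fun i => (i : ℕ) < k)

lemma preSet_eq_map (k : ℕ) (hk : k ≤ m) :
    preSet m k = (univ : Finset (Fin k)).map (Fin.castLEEmb hk) := by
  ext i
  simp only [preSet, Finset.mem_filter, Finset.mem_univ, true_and, Finset.mem_map]
  constructor
  · intro h
    exact ⟨⟨(i : ℕ), h⟩, by ext; simp [Fin.castLEEmb]⟩
  · rintro ⟨j, -, rfl⟩
    simpa [Fin.castLEEmb] using j.isLt

lemma preSet_card (k : ℕ) (hk : k ≤ m) : (preSet m k).card = k := by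
  rw [preSet_eq_map k hk, Finset.card_map, Finset.card_univ, Fintype.card_fin]

lemma preSet_sum (x : Fin m → ℝ) (k : ℕ) (hk : k ≤ m) :
    ∑ i ∈ preSet m k, x i = ∑ j ∈ range k, extN x j := by
  rw [preSet_eq_map k hk, Finset.sum_map]
  rw [← Fin.sum_univ_eq_sum_range (fun j => extN x j) k]
  refine Finset.sum_congr rfl ?_
  intro j _
  rw [extN_apply x (j.isLt.trans_le hk)]
  rfl

lemma sum_card_le_prefix {x : Fin m → ℝ} (hx : Antitone x) {k : ℕ} (hk : k ≤ m)
    (s : Finset (Fin m)) (hs : s.card = k) :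
    ∑ i ∈ s, x i ≤ ∑ j ∈ range k, extN x j := by
  classical
  have hrange : Finset.image (⇑(s.orderEmbOfFin hs)) univ = s := by
    ext i
    simp only [Finset.mem_image, Finset.mem_univ, true_and]
    constructor
    · rintro ⟨j, rfl⟩; exact s.orderEmbOfFin_mem hs j
    · intro hi
      have := Finset.range_orderEmbOfFin s hs
      have : i ∈ Set.range (s.orderEmbOfFin hs) := by rw [this]; exact hi
      obtain ⟨j, hj⟩ := this
      exact ⟨j, hj⟩
  have hsum : ∑ i ∈ Finset.image (⇑(s.orderEmbOfFin hs)) univ, x i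
      = ∑ j : Fin k, x (s.orderEmbOfFin hs j) :=
    Finset.sum_image (fun p _ q _ h => (s.orderEmbOfFin hs).injective h)
  rw [hrange] at hsum
  rw [hsum, ← Fin.sum_univ_eq_sum_range (fun j => extN x j) k]
  refine Finset.sum_le_sum ?_
  intro j _
  rw [extN_apply x (j.isLt.trans_le hk)]
  apply hx
  have hle := strictMono_fin_le _ (s.orderEmbOfFin hs).strictMono j
  exact Fin.mk_le_of_le_val hle

lemma sumLargest_antitone_eq {x : Fin m → ℝ} (hx : Antitone x) {k : ℕ} (hk : k ≤ m) :
    sumLargest x k = ∑ j ∈ range k, extN x j := by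
  apply le_antisymm
  · exact sumLargest_le x hk (fun s hs => sum_card_le_prefix hx hk s hs)
  · rw [← preSet_sum x k hk]
    exact le_sumLargest x _ (preSet_card k hk)

lemma prefix_le_sumLargest (y : Fin m → ℝ) {k : ℕ} (hk : k ≤ m) :
    ∑ j ∈ range k, extN y j ≤ sumLargest y k := by
  rw [← preSet_sum y k hk]
  exact le_sumLargest y _ (preSet_card k hk)

/-- The `Nbar` polynomial. -/
noncomputable def nPoly (a : Fin m → ℝ) : ℝ :=
  ∏ i, (1 - a i) + ∑ i, a i * ∏ j ∈ univ.erase i, (1 - a j)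

lemma nPoly_factor [NeZero m] (a : Fin m → ℝ) (l : Fin m)
    (hpos : ∀ j, j ≠ l → 0 < 1 - a j) :
    nPoly a = (∏ j ∈ univ.erase l, (1 - a j)) *
      (1 - (a l - 1) * ∑ i ∈ univ.erase l, a i / (1 - a i)) := by
  have hl : l ∈ (univ : Finset (Fin m)) := Finset.mem_univ l
  have hprod : ∏ i, (1 - a i) = (1 - a l) * ∏ j ∈ univ.erase l, (1 - a j) :=
    (Finset.mul_prod_erase univ _ hl).symm
  have hsum : ∑ i, a i * ∏ j ∈ univ.erase i, (1 - a j)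
      = a l * ∏ j ∈ univ.erase l, (1 - a j)
        + ∑ i ∈ univ.erase l, a i * ∏ j ∈ univ.erase i, (1 - a j) :=
    (Finset.add_sum_erase univ _ hl).symm
  have hterm : ∀ i ∈ univ.erase l, a i * ∏ j ∈ univ.erase i, (1 - a j)
      = (1 - a l) * (a i / (1 - a i)) * ∏ j ∈ univ.erase l, (1 - a j) := by
    intro i hi
    have hil : i ≠ l := (Finset.mem_erase.mp hi).1
    have h1 : ∏ j ∈ univ.erase i, (1 - a j)
        = (1 - a l) * ∏ j ∈ (univ.erase i).erase l, (1 - a j) :=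
      (Finset.mul_prod_erase _ _ (Finset.mem_erase.mpr ⟨hil.symm, Finset.mem_univ l⟩)).symm
    have h2 : ∏ j ∈ univ.erase l, (1 - a j)
        = (1 - a i) * ∏ j ∈ (univ.erase l).erase i, (1 - a j) :=
      (Finset.mul_prod_erase _ _ (Finset.mem_erase.mpr ⟨hil, Finset.mem_univ i⟩)).symm
    have hcomm : (univ.erase i).erase l = (univ.erase l).erase i := Finset.erase_right_comm
    have hai : (1 : ℝ) - a i ≠ 0 := ne_of_gt (hpos i hil)
    rw [h1, hcomm, h2]
    field_simp
  rw [nPoly, hprod, hsum, Finset.sum_congr rfl hterm]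
  rw [← Finset.sum_mul, ← Finset.mul_sum]
  ring


lemma abel_nonpos (N : ℕ) (c d : ℕ → ℝ) (hc : ∀ i, 0 ≤ c i)
    (hmono : ∀ i, c (i + 1) ≤ c i)
    (hD : ∀ k, k ≤ N → ∑ j ∈ range k, d j ≤ 0) :
    ∑ j ∈ range N, c j * d j ≤ 0 := by
  have := Finset.sum_range_by_parts c d N
  simp only [smul_eq_mul] at this
  rw [this]
  have h1 : c (N - 1) * ∑ i ∈ range N, d i ≤ 0 :=
    mul_nonpos_of_nonneg_of_nonpos (hc _) (hD N le_rfl)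
  have h2 : 0 ≤ ∑ i ∈ range (N - 1), (c (i + 1) - c i) * ∑ j ∈ range (i + 1), d j := by
    apply Finset.sum_nonneg
    intro i hi
    rw [Finset.mem_range] at hi
    have ha : c (i + 1) - c i ≤ 0 := by linarith [hmono i]
    have hb : ∑ j ∈ range (i + 1), d j ≤ 0 := hD (i + 1) (by omega)
    nlinarith
  linarith

/-- HLP-type inequality for `g u = u / (1 - u)` via Abel summation. -/
lemma hlp_g (N : ℕ) (U V : ℕ → ℝ)
    (hU0 : ∀ j, 0 ≤ U j) (hV0 : ∀ j, 0 ≤ V j)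
    (hU1 : ∀ j, U j < 1) (hV1 : ∀ j, V j < 1)
    (hUa : ∀ j, U (j + 1) ≤ U j) (hVa : ∀ j, V (j + 1) ≤ V j)
    (hD : ∀ k, k ≤ N → ∑ j ∈ range k, U j ≤ ∑ j ∈ range k, V j) :
    ∑ j ∈ range N, U j / (1 - U j) ≤ ∑ j ∈ range N, V j / (1 - V j) := by
  set c : ℕ → ℝ := fun j => ((1 - U j) * (1 - V j))⁻¹ with hc
  set d : ℕ → ℝ := fun j => U j - V j with hd
  have hUpos : ∀ j, 0 < 1 - U j := fun j => by linarith [hU1 j]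
  have hVpos : ∀ j, 0 < 1 - V j := fun j => by linarith [hV1 j]
  have key : ∀ j, U j / (1 - U j) - V j / (1 - V j) = c j * d j := by
    intro j
    have h1 := (hUpos j).ne'
    have h2 := (hVpos j).ne'
    simp only [hc, hd]
    rw [div_sub_div _ _ h1 h2, div_eq_inv_mul]
    ring
  have habel : ∑ j ∈ range N, c j * d j ≤ 0 := by
    apply abel_nonpos
    · intro i
      exact le_of_lt (inv_pos.mpr (mul_pos (hUpos i) (hVpos i)))
    · intro i
      apply inv_anti₀ (mul_pos (hUpos i) (hVpos i))
      have := hUa i; have := hVa i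
      nlinarith [hUpos (i+1), hVpos (i+1), hUpos i, hVpos i]
    · intro k hk
      have := hD k hk
      simp only [hd, Finset.sum_sub_distrib]
      linarith
  calc ∑ j ∈ range N, U j / (1 - U j)
      = ∑ j ∈ range N, V j / (1 - V j) + ∑ j ∈ range N, (c j * d j) := by
        rw [← Finset.sum_add_distrib]
        refine Finset.sum_congr rfl (fun j _ => ?_)
        rw [← key j]; ring
    _ ≤ ∑ j ∈ range N, V j / (1 - V j) := by linarith

lemma sum_erase_zero {n : ℕ} (h : Fin (n + 2) → ℝ) :
    ∑ i ∈ univ.erase 0, h i = ∑ j ∈ range (n + 1), extN (fun i : Fin (n + 1) => h i.succ) j := by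
  have h1 : ∑ i, h i = h 0 + ∑ i ∈ univ.erase 0, h i :=
    (Finset.add_sum_erase univ h (Finset.mem_univ 0)).symm
  have h2 : ∑ i, h i = h 0 + ∑ i : Fin (n + 1), h i.succ := Fin.sum_univ_succ h
  have h3 : ∑ i : Fin (n + 1), h i.succ
      = ∑ j ∈ range (n + 1), extN (fun i : Fin (n + 1) => h i.succ) j := by
    rw [← Fin.sum_univ_eq_sum_range (fun j => extN (fun i : Fin (n + 1) => h i.succ) j) (n + 1)]
    refine Finset.sum_congr rfl (fun j _ => ?_)
    rw [extN_apply _ j.isLt]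
  rw [← h3]
  linarith

set_option maxHeartbeats 2000000 in
lemma main_sorted {m : ℕ} (hm : 2 ≤ m) (C : Set (Fin m → ℝ))
    (hconv : Convex ℝ C)
    (hsym : ∀ a ∈ C, ∀ σ : Equiv.Perm (Fin m), a ∘ σ ∈ C)
    (hCN : C ⊆ Nbar m)
    (x : Fin m → ℝ) (hx : x ∈ C) (hxa : Antitone x)
    (y : Fin m → ℝ) (hy : ∀ i, 0 ≤ y i) (hya : Antitone y)
    (hmaj : WeaklyMajorizedBy y x) :
    y ∈ Nbar m := by
  obtain ⟨n, rfl⟩ : ∃ n, m = n + 2 := ⟨m - 2, by omega⟩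
  -- pairwise sums bound for members of C
  have hpairC : ∀ a ∈ C, ∀ i j, i ≠ j → a i + a j ≤ 2 := by
    intro a ha i j hij
    set w := (2⁻¹ : ℝ) • a + (2⁻¹ : ℝ) • (a ∘ (Equiv.swap i j)) with hw
    have hwC : w ∈ C :=
      hconv ha (hsym a ha (Equiv.swap i j)) (by norm_num) (by norm_num) (by norm_num)
    obtain ⟨hw0, hw1, -⟩ := hCN hwC
    have hwi : w i = (a i + a j) / 2 := by
      simp [hw, Equiv.swap_apply_left]
      ring
    have hwj : w j = (a i + a j) / 2 := by
      simp [hw, Equiv.swap_apply_right]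
      ring
    have h1 := hw1 i j hij
    have h0 := hw0 i
    rw [hwi, hwj] at h1
    rw [hwi] at h0
    nlinarith
  have hy2 : ∀ i j, i ≠ j → y i + y j ≤ 2 := by
    intro i j hij
    have h1 : y i + y j ≤ sumLargest y 2 := by
      have hp : ∑ k ∈ ({i, j} : Finset _), y k = y i + y j := Finset.sum_pair hij
      rw [← hp]
      exact le_sumLargest y _ (Finset.card_pair hij)
    have h2 : sumLargest y 2 ≤ sumLargest x 2 := hmaj 2 (by norm_num) (by omega)
    have h3 : sumLargest x 2 ≤ 2 := by
      apply sumLargest_le x (by omega)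
      intro s hs
      obtain ⟨a, b, hab, rfl⟩ := Finset.card_eq_two.mp hs
      rw [Finset.sum_pair hab]
      exact hpairC x hx a b hab
    linarith
  refine ⟨hy, ?_, ?_⟩
  · intro i j hij
    have h2 := hy2 i j hij
    have h4 : (y i + y j) ^ 2 ≤ 4 := by nlinarith [hy i, hy j]
    nlinarith [sq_nonneg (y i - y j)]
  by_cases hall : ∀ i, y i ≤ 1
  · -- easy case : all coordinates at most 1
    apply add_nonneg
    · exact Finset.prod_nonneg (fun i _ => by linarith [hall i])
    · exact Finset.sum_nonneg (fun i _ => mul_nonneg (hy i)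
        (Finset.prod_nonneg (fun j _ => by linarith [hall j])))
  -- hard case
  push_neg at hall
  obtain ⟨l, hl⟩ := hall
  have ht : 1 < y 0 := lt_of_lt_of_le hl (hya (Fin.zero_le l))
  set t := y 0 with htdef
  -- t ≤ x 0
  have htx0 : t ≤ x 0 := by
    have h1 : t ≤ sumLargest y 1 := by
      have : ∑ k ∈ ({0} : Finset (Fin (n+2))), y k = t := by simp [htdef]
      rw [← this]
      exact le_sumLargest y _ (Finset.card_singleton _)
    have h2 : sumLargest y 1 ≤ sumLargest x 1 := hmaj 1 le_rfl (by omega)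
    have h3 : sumLargest x 1 ≤ x 0 := by
      apply sumLargest_le x (by omega)
      intro s hs
      obtain ⟨a, rfl⟩ := Finset.card_eq_one.mp hs
      rw [Finset.sum_singleton]
      exact hxa (Fin.zero_le a)
    linarith
  -- largest index p with x p ≥ t
  have hP0 : (0 : Fin (n + 2)) ∈ univ.filter (fun i => t ≤ x i) := by
    simp [htx0]
  set P := univ.filter (fun i => t ≤ x i) with hPdef
  set p := P.max' ⟨0, hP0⟩ with hpdef
  have hpt : t ≤ x p := (Finset.mem_filter.mp (P.max'_mem ⟨0, hP0⟩)).2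
  have hmax : ∀ i, t ≤ x i → i ≤ p := fun i hi =>
    P.le_max' i (Finset.mem_filter.mpr ⟨Finset.mem_univ _, hi⟩)
  have hlast : x (Fin.last (n + 1)) < t := by
    have hne : (0 : Fin (n + 2)) ≠ Fin.last (n + 1) := by
      intro h
      have := congrArg Fin.val h
      simp [Fin.last] at this
    have := hpairC x hx 0 (Fin.last (n + 1)) hne
    linarith
  have hplt : (p : ℕ) < n + 1 := by
    rcases lt_or_eq_of_le (Nat.lt_succ_iff.mp p.isLt) with h | h
    · exact h
    · exfalso
      have : p = Fin.last (n + 1) := Fin.ext h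
      rw [this] at hpt
      linarith
  set q : Fin (n + 2) := ⟨(p : ℕ) + 1, by omega⟩ with hqdef
  have hqval : (q : ℕ) = (p : ℕ) + 1 := rfl
  have hpq : p ≠ q := by
    intro h
    have := congrArg Fin.val h
    simp [hqdef] at this
  have hq : x q < t := by
    by_contra h
    push_neg at h
    have := hmax q h
    rw [Fin.le_def] at this
    simp [hqdef] at this
  have hdenom : 0 < x p - x q := by linarith
  set lam := (t - x q) / (x p - x q) with hlamdef
  have hlam0 : 0 ≤ lam := div_nonneg (by linarith) (le_of_lt hdenom)
  have hlam1 : lam ≤ 1 := (div_le_one hdenom).mpr (by linarith)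
  have hlam_mul : lam * (x p - x q) = t - x q := div_mul_cancel₀ _ (ne_of_gt hdenom)
  set πa := (Fin.cycleRange p)⁻¹ with hπadef
  set πb := (Fin.cycleRange q)⁻¹ with hπbdef
  set z := lam • (x ∘ ⇑πa) + (1 - lam) • (x ∘ ⇑πb) with hzdef
  have hzC : z ∈ C := hconv (hsym x hx πa) (hsym x hx πb) hlam0 (by linarith) (by ring)
  have hzapp : ∀ i, z i = lam * x (πa i) + (1 - lam) * x (πb i) := by
    intro i
    simp [hzdef]
  -- cycleRange value lemmas
  have hfin_add : ∀ (j : ℕ) (hj : j + 1 < n + 2),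
      (⟨j, by omega⟩ : Fin (n + 2)) + 1 = ⟨j + 1, hj⟩ := by
    intro j hj
    apply Fin.ext
    rw [Fin.val_add_one_of_lt]
    simp [Fin.lt_def, Fin.last]
    omega
  have hπa0 : πa 0 = p := by
    rw [hπadef, Equiv.Perm.inv_eq_iff_eq]
    exact (Fin.cycleRange_self p).symm
  have hπb0 : πb 0 = q := by
    rw [hπbdef, Equiv.Perm.inv_eq_iff_eq]
    exact (Fin.cycleRange_self q).symm
  have hπa_le : ∀ (j : ℕ) (hj : j + 1 < n + 2), j + 1 ≤ (p : ℕ) →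
      πa ⟨j + 1, hj⟩ = ⟨j, by omega⟩ := by
    intro j hj hjp
    rw [hπadef, Equiv.Perm.inv_eq_iff_eq]
    rw [Fin.cycleRange_of_lt (by simp only [Fin.lt_def, Fin.val_mk]; omega)]
    exact (hfin_add j hj).symm
  have hπa_gt : ∀ (j : ℕ) (hj : j < n + 2), (p : ℕ) < j →
      πa ⟨j, hj⟩ = ⟨j, hj⟩ := by
    intro j hj hjp
    rw [hπadef, Equiv.Perm.inv_eq_iff_eq]
    rw [Fin.cycleRange_of_gt (by simp only [Fin.lt_def, Fin.val_mk]; omega)]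
  have hπb_le : ∀ (j : ℕ) (hj : j + 1 < n + 2), j + 1 ≤ (q : ℕ) →
      πb ⟨j + 1, hj⟩ = ⟨j, by omega⟩ := by
    intro j hj hjp
    rw [hπbdef, Equiv.Perm.inv_eq_iff_eq]
    rw [Fin.cycleRange_of_lt (by simp only [Fin.lt_def, Fin.val_mk]; omega)]
    exact (hfin_add j hj).symm
  have hπb_gt : ∀ (j : ℕ) (hj : j < n + 2), (q : ℕ) < j →
      πb ⟨j, hj⟩ = ⟨j, hj⟩ := by
    intro j hj hjp
    rw [hπbdef, Equiv.Perm.inv_eq_iff_eq]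
    rw [Fin.cycleRange_of_gt (by simp only [Fin.lt_def, Fin.val_mk]; omega)]
  -- z values
  have hz0 : z 0 = t := by
    rw [hzapp 0, hπa0, hπb0]
    linear_combination hlam_mul
  have hzlt : ∀ (j : ℕ) (hjp : j < (p : ℕ)),
      z ⟨j + 1, by omega⟩ = x ⟨j, by omega⟩ := by
    intro j hjp
    have hj : j + 1 < n + 2 := by omega
    rw [hzapp, hπa_le j hj (by omega), hπb_le j hj (by simp [hqdef]; omega)]
    ring
  have hzq : z q = x p + x q - t := by
    have hq2 : q = ⟨(p : ℕ) + 1, by omega⟩ := Fin.ext rfl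
    have h1 : πa q = q := by
      rw [hq2]; exact hπa_gt _ _ (by omega)
    have h2 : πb q = p := by
      rw [hq2]
      rw [hπb_le (p : ℕ) (by omega) (by simp [hqdef])]
    rw [hzapp, h1, h2, hq2]
    have : x (⟨(p : ℕ) + 1, by omega⟩ : Fin (n + 2)) = x q := by rw [← hq2]
    rw [this]
    linear_combination (-1 : ℝ) * hlam_mul
  have hzgt : ∀ (j : ℕ) (hj : j + 1 < n + 2), (p : ℕ) < j →
      z ⟨j + 1, hj⟩ = x ⟨j + 1, hj⟩ := by
    intro j hj hjp
    rw [hzapp, hπa_gt _ _ (by omega), hπb_gt _ _ (by simp [hqdef]; omega)]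
    ring
  -- the shifted sequences
  have hsucc_mk : ∀ (j : ℕ) (hj : j < n + 1),
      Fin.succ (⟨j, hj⟩ : Fin (n + 1)) = (⟨j + 1, by omega⟩ : Fin (n + 2)) := fun j hj => rfl
  set U := extN (fun i : Fin (n + 1) => y i.succ) with hUdef
  set V := extN (fun i : Fin (n + 1) => z i.succ) with hVdef
  have hUval : ∀ (j : ℕ) (hj : j < n + 1), U j = y ⟨j + 1, by omega⟩ := by
    intro j hj
    rw [hUdef, extN_apply _ hj, hsucc_mk j hj]
  have hVval : ∀ (j : ℕ) (hj : j < n + 1), V j = z ⟨j + 1, by omega⟩ := by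
    intro j hj
    rw [hVdef, extN_apply _ hj, hsucc_mk j hj]
  have hUzero : ∀ (j : ℕ), ¬ (j < n + 1) → U j = 0 := by
    intro j hj
    rw [hUdef]
    exact dif_neg hj
  have hVzero : ∀ (j : ℕ), ¬ (j < n + 1) → V j = 0 := by
    intro j hj
    rw [hVdef]
    exact dif_neg hj
  have hz_nn : ∀ i, 0 ≤ z i := (hCN hzC).1
  have hz_small : ∀ i, i ≠ (0 : Fin (n + 2)) → z i ≤ 2 - t := by
    intro i hi
    have := hpairC z hzC 0 i (Ne.symm hi)
    rw [hz0] at this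
    linarith
  have hy_small : ∀ i, i ≠ (0 : Fin (n + 2)) → y i ≤ 2 - t := by
    intro i hi
    have := hy2 0 i (Ne.symm hi)
    linarith
  have hmk_ne : ∀ (j : ℕ) (hj : j + 1 < n + 2), (⟨j + 1, hj⟩ : Fin (n + 2)) ≠ 0 := by
    intro j hj h
    have := congrArg Fin.val h
    simp at this
  have hU0 : ∀ j, 0 ≤ U j := by
    intro j
    by_cases hj : j < n + 1
    · rw [hUval j hj]; exact hy _
    · rw [hUzero j hj]
  have hV0 : ∀ j, 0 ≤ V j := by
    intro j
    by_cases hj : j < n + 1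
    · rw [hVval j hj]; exact hz_nn _
    · rw [hVzero j hj]
  have hU1 : ∀ j, U j < 1 := by
    intro j
    by_cases hj : j < n + 1
    · rw [hUval j hj]
      have := hy_small _ (hmk_ne j (by omega))
      linarith
    · rw [hUzero j hj]; norm_num
  have hV1 : ∀ j, V j < 1 := by
    intro j
    by_cases hj : j < n + 1
    · rw [hVval j hj]
      have := hz_small _ (hmk_ne j (by omega))
      linarith
    · rw [hVzero j hj]; norm_num
  have hUa : ∀ j, U (j + 1) ≤ U j := by
    intro j
    by_cases hj : j + 1 < n + 1
    · rw [hUval (j + 1) hj, hUval j (by omega)]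
      exact hya (by rw [Fin.le_def]; simp)
    · rw [hUzero (j + 1) hj]
      exact hU0 j
  -- explicit values of V
  have hVlt : ∀ (j : ℕ), j < (p : ℕ) → V j = extN x j := by
    intro j hj
    have hj1 : j < n + 1 := by omega
    rw [hVval j hj1, hzlt j hj, extN_apply x (by omega)]
  have hVp : V (p : ℕ) = x p + x q - t := by
    have hj1 : (p : ℕ) < n + 1 := hplt
    rw [hVval _ hj1]
    have : (⟨(p : ℕ) + 1, by omega⟩ : Fin (n + 2)) = q := Fin.ext rfl
    rw [this, hzq]
  have hVgt : ∀ (j : ℕ), (p : ℕ) < j → j < n + 1 → V j = extN x (j + 1) := by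
    intro j hj hj1
    rw [hVval j hj1, hzgt j (by omega) hj, extN_apply x (by omega)]
  have hVa : ∀ j, V (j + 1) ≤ V j := by
    intro j
    by_cases hj : j + 1 < n + 1
    · rcases lt_trichotomy (j + 1) (p : ℕ) with h | h | h
      · rw [hVlt (j + 1) h, hVlt j (by omega), extN_apply x (by omega),
          extN_apply x (by omega)]
        exact hxa (by rw [Fin.le_def]; simp)
      · rw [h, hVp, hVlt j (by omega), extN_apply x (by omega)]
        have h1 : x p ≤ x ⟨j, by omega⟩ := hxa (by rw [Fin.le_def]; simp; omega)
        linarith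
      · rcases Nat.lt_or_ge (p : ℕ) j with h2 | h2
        · rw [hVgt (j + 1) h hj, hVgt j h2 (by omega), extN_apply x (by omega),
            extN_apply x (by omega)]
          exact hxa (by rw [Fin.le_def]; simp)
        · have hpj : (p : ℕ) = j := by omega
          rw [hVgt (j + 1) h hj, ← hpj, hVp, extN_apply x (by omega)]
          have h1 : x ⟨(p : ℕ) + 2, by omega⟩ ≤ x q := hxa (by simp only [Fin.le_def, Fin.val_mk]; omega)
          linarith
    · rw [hVzero (j + 1) hj]
      exact hV0 j
  -- prefix-sum domination
  have hD : ∀ k, k ≤ n + 1 → ∑ j ∈ range k, U j ≤ ∑ j ∈ range k, V j := by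
    intro k hk
    rcases Nat.eq_zero_or_pos k with hk0 | hk1
    · subst hk0; simp
    rcases le_or_gt k (p : ℕ) with hkp | hkp
    · -- k ≤ p : prefix of x
      have h1 : ∑ j ∈ range k, U j ≤ ∑ j ∈ range k, extN y j := by
        apply Finset.sum_le_sum
        intro j hj
        rw [Finset.mem_range] at hj
        have hjk : j < n + 1 := by omega
        rw [hUval j hjk, extN_apply y (by omega)]
        exact hya (by rw [Fin.le_def]; simp)
      have h2 : ∑ j ∈ range k, extN y j ≤ sumLargest y k :=
        prefix_le_sumLargest y (by omega)
      have h3 : sumLargest y k ≤ sumLargest x k := hmaj k hk1 (by omega)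
      have h4 : sumLargest x k = ∑ j ∈ range k, extN x j :=
        sumLargest_antitone_eq hxa (by omega)
      have h5 : ∑ j ∈ range k, extN x j = ∑ j ∈ range k, V j := by
        refine Finset.sum_congr rfl (fun j hj => ?_)
        rw [Finset.mem_range] at hj
        rw [hVlt j (by omega)]
      linarith
    · -- p < k : use the shifted prefix
      have hUsum : ∑ j ∈ range k, U j = ∑ j ∈ range (k + 1), extN y j - t := by
        have h1 : ∑ j ∈ range (k + 1), extN y j
            = ∑ j ∈ range k, extN y (j + 1) + extN y 0 := Finset.sum_range_succ' _ k
        have h2 : ∑ j ∈ range k, U j = ∑ j ∈ range k, extN y (j + 1) := by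
          refine Finset.sum_congr rfl (fun j hj => ?_)
          rw [Finset.mem_range] at hj
          rw [hUval j (by omega), extN_apply y (by omega)]
        have h3 : extN y 0 = t := by
          rw [extN_apply y (by omega)]
          exact congrArg y (Fin.ext rfl)
        rw [h2]
        rw [h1, h3]
        ring
      have hVsum : ∑ j ∈ range k, V j = ∑ j ∈ range (k + 1), extN x j - t := by
        have hWsplit : ∀ j ∈ range k, V j = extN x (j + 1) +
            (if j < (p : ℕ) then extN x j - extN x (j + 1)
              else if j = (p : ℕ) then extN x (p : ℕ) - t else 0) := by
          intro j hj
          rw [Finset.mem_range] at hj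
          rcases lt_trichotomy j (p : ℕ) with h | h | h
          · rw [hVlt j h, if_pos h]
            ring
          · rw [h, hVp, if_neg (lt_irrefl _), if_pos rfl]
            have e1 : extN x ((p : ℕ) + 1) = x q := by
              rw [extN_apply x (by omega)]
            have e2 : extN x (p : ℕ) = x p := by
              rw [extN_apply x (by omega)]
            rw [e1, e2]
            ring
          · rw [hVgt j h (by omega), if_neg (by omega), if_neg (by omega)]
            ring
        rw [Finset.sum_congr rfl hWsplit, Finset.sum_add_distrib]
        have hshift : ∑ j ∈ range k, extN x (j + 1)
            = ∑ j ∈ range (k + 1), extN x j - extN x 0 := by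
          rw [Finset.sum_range_succ' (extN x) k]
          ring
        have hifsum : ∑ j ∈ range k,
            (if j < (p : ℕ) then extN x j - extN x (j + 1)
              else if j = (p : ℕ) then extN x (p : ℕ) - t else 0)
            = extN x 0 - t := by
          rw [← Finset.sum_subset (Finset.range_subset_range.mpr (show (p : ℕ) + 1 ≤ k by omega))]
          · rw [Finset.sum_range_succ, if_neg (lt_irrefl _), if_pos rfl]
            have : ∑ j ∈ range (p : ℕ),
                (if j < (p : ℕ) then extN x j - extN x (j + 1)
                  else if j = (p : ℕ) then extN x (p : ℕ) - t else 0)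
                = ∑ j ∈ range (p : ℕ), (extN x j - extN x (j + 1)) := by
              refine Finset.sum_congr rfl (fun j hj => ?_)
              rw [Finset.mem_range] at hj
              rw [if_pos hj]
            rw [this, Finset.sum_range_sub' (extN x) (p : ℕ)]
            ring
          · intro j hj hjp
            rw [Finset.mem_range] at hj
            rw [Finset.mem_range, not_lt] at hjp
            rw [if_neg (by omega), if_neg (by omega)]
        rw [hshift, hifsum]
        ring
      have h2 : ∑ j ∈ range (k + 1), extN y j ≤ sumLargest y (k + 1) :=
        prefix_le_sumLargest y (by omega)
      have h3 : sumLargest y (k + 1) ≤ sumLargest x (k + 1) := hmaj (k + 1) (by omega) (by omega)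
      have h4 : sumLargest x (k + 1) = ∑ j ∈ range (k + 1), extN x j :=
        sumLargest_antitone_eq hxa (by omega)
      rw [hUsum, hVsum]
      linarith
  -- the HLP inequality
  have hG : ∑ i ∈ univ.erase 0, y i / (1 - y i) ≤ ∑ i ∈ univ.erase 0, z i / (1 - z i) := by
    have hyG : ∑ i ∈ univ.erase 0, y i / (1 - y i) = ∑ j ∈ range (n + 1), U j / (1 - U j) := by
      rw [sum_erase_zero (fun i => y i / (1 - y i))]
      refine Finset.sum_congr rfl (fun j hj => ?_)
      rw [Finset.mem_range] at hj
      rw [extN_apply _ hj, hUval j hj, hsucc_mk j hj]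
    have hzG : ∑ i ∈ univ.erase 0, z i / (1 - z i) = ∑ j ∈ range (n + 1), V j / (1 - V j) := by
      rw [sum_erase_zero (fun i => z i / (1 - z i))]
      refine Finset.sum_congr rfl (fun j hj => ?_)
      rw [Finset.mem_range] at hj
      rw [extN_apply _ hj, hVval j hj, hsucc_mk j hj]
    rw [hyG, hzG]
    exact hlp_g (n + 1) U V hU0 hV0 hU1 hV1 hUa hVa hD
  -- conclusion via factorization
  have hposy : ∀ j, j ≠ (0 : Fin (n + 2)) → 0 < 1 - y j := by
    intro j hj
    have := hy_small j hj
    linarith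
  have hposz : ∀ j, j ≠ (0 : Fin (n + 2)) → 0 < 1 - z j := by
    intro j hj
    have := hz_small j hj
    linarith
  have hfy := nPoly_factor y 0 hposy
  have hfz := nPoly_factor z 0 hposz
  have hQy : 0 < ∏ j ∈ univ.erase (0 : Fin (n + 2)), (1 - y j) :=
    Finset.prod_pos (fun j hj => hposy j (Finset.mem_erase.mp hj).1)
  have hQz : 0 < ∏ j ∈ univ.erase (0 : Fin (n + 2)), (1 - z j) :=
    Finset.prod_pos (fun j hj => hposz j (Finset.mem_erase.mp hj).1)
  have hpz : 0 ≤ nPoly z := (hCN hzC).2.2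
  rw [hfz, hz0] at hpz
  have hB : 0 ≤ 1 - (t - 1) * ∑ i ∈ univ.erase 0, z i / (1 - z i) := by
    nlinarith
  have hGy : (t - 1) * ∑ i ∈ univ.erase 0, y i / (1 - y i) ≤ 1 := by
    have h1 : (t - 1) * ∑ i ∈ univ.erase 0, y i / (1 - y i)
        ≤ (t - 1) * ∑ i ∈ univ.erase 0, z i / (1 - z i) :=
      mul_le_mul_of_nonneg_left hG (by linarith)
    linarith
  show 0 ≤ nPoly y
  rw [hfy]
  apply mul_nonneg (le_of_lt hQy)
  have : y 0 = t := rfl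
  rw [this]
  linarith

end Aux

theorem weakMaj_mem_Nbar {m : ℕ} (hm : 2 ≤ m) (C : Set (Fin m → ℝ))
    (hconv : Convex ℝ C)
    (hsym : ∀ a ∈ C, ∀ σ : Equiv.Perm (Fin m), a ∘ σ ∈ C)
    (hCN : C ⊆ Nbar m)
    (x : Fin m → ℝ) (hx : x ∈ C)
    (y : Fin m → ℝ) (hy : ∀ i, 0 ≤ y i)
    (hmaj : WeaklyMajorizedBy y x) :
    y ∈ Nbar m := by
  classical
  set σx := Tuple.sort (fun i => -x i) with hσx
  have hxa : Antitone (x ∘ σx) := by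
    intro i j hij
    have h := Tuple.monotone_sort (fun i => -x i) hij
    simp only [Function.comp_apply, neg_le_neg_iff] at h
    exact h
  set σy := Tuple.sort (fun i => -y i) with hσy
  have hya : Antitone (y ∘ σy) := by
    intro i j hij
    have h := Tuple.monotone_sort (fun i => -y i) hij
    simp only [Function.comp_apply, neg_le_neg_iff] at h
    exact h
  have hx' : x ∘ σx ∈ C := hsym x hx σx
  have hy' : ∀ i, 0 ≤ (y ∘ σy) i := fun i => hy _
  have hmaj' : WeaklyMajorizedBy (y ∘ σy) (x ∘ σx) := by
    intro k h1 h2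
    rw [sumLargest_comp_perm, sumLargest_comp_perm]
    exact hmaj k h1 h2
  have hmem := main_sorted hm C hconv hsym hCN _ hx' hxa _ hy' hya hmaj'
  have hyy : (y ∘ σy) ∘ ⇑σy⁻¹ = y := by
    funext i
    simp
  rw [← hyy]
  exact Nbar_comp_perm hmem σy⁻¹
end
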